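/- In a decreasing consumption MDP, if Safe_M(s) < ∞ then there exists an action a safe in s, i.e., either s ∉ R and C(s,a) + max_{t ∈ Succ(s,a)} Safe_M(t) ≤ Safe_M(s), or s ∈ R and C(s,a) + max_{t ∈ Succ(s,a)} Safe_M(t) ≤ cap. -/

import Mathlib

open scoped Classical NNReal ENat

noncomputable section

/-- A consumption Markov decision process. -/
structure CMDP (S A : Type) [Fintype S] where
  Δ : S → A → S → NNReal
  Δ_sum : ∀ s a, (∑ t, Δ s a t) = 1
  C : S → A → ℕ
  R : Set S
  cap : ℕ

namespace CMDP

variable {S A : Type} [Fintype S]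

/-- Strategies map histories (initial state, list of action/state steps) to actions. -/
abbrev Strat (S A : Type) : Type := S × List (A × S) → A

/-- Last state of a history. -/
def lastState (s : S) : List (A × S) → S
  | [] => s
  | (_, t) :: rest => lastState t rest

/-- The `i`-th state (0-indexed) of a history. -/
def stateAt (s : S) (steps : List (A × S)) (i : ℕ) : S :=
  (s :: steps.map Prod.snd).getD i s

variable (M : CMDP S A)

def Succ (s : S) (a : A) : Set S := {t | 0 < M.Δ s a t}

/-- Total consumption along a finite path. -/
def consAux : S → List (A × S) → ℕ
  | _, [] => 0
  | s, (a, t) :: rest => M.C s a + consAux t rest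

/-- One step of the energy-level update. -/
def levelStep (s : S) (a : A) (l : ℕ) : Option ℕ :=
  if s ∈ M.R then (if M.C s a ≤ M.cap then some (M.cap - M.C s a) else none)
  else (if M.C s a ≤ l then some (l - M.C s a) else none)

def energyFrom : Option ℕ → S → List (A × S) → Option ℕ
  | none, _, _ => none
  | some l, _, [] => some l
  | some l, s, (a, t) :: rest => energyFrom (M.levelStep s a l) t rest

/-- Energy level of a history initialized by `d` (`none` = ⊥, exhaustion). -/
def energy (d : ℕ) (s : S) (steps : List (A × S)) : Option ℕ :=
  M.energyFrom (some d) s steps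

/-- Validity of a finite path. -/
def ValidPath : S → List (A × S) → Prop
  | _, [] => True
  | s, (a, t) :: rest => t ∈ M.Succ s a ∧ ValidPath t rest

/-- First state of a run. -/
def runState (ρ : ℕ → S × A) (i : ℕ) : S := (ρ i).1

/-- The finite prefix of a run with `i` steps. -/
def prefixSteps (ρ : ℕ → S × A) (i : ℕ) : List (A × S) :=
  (List.range i).map fun k => ((ρ k).2, (ρ (k + 1)).1)

def IsRun (ρ : ℕ → S × A) : Prop := ∀ i, (ρ (i + 1)).1 ∈ M.Succ (ρ i).1 (ρ i).2

/-- A run is `d`-safe if the energy level of every finite prefix is defined. -/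
def DSafe (d : ℕ) (ρ : ℕ → S × A) : Prop :=
  ∀ i, M.energy d (runState ρ 0) (prefixSteps ρ i) ≠ none

/-- A run is compatible with a strategy. -/
def Compat (σ : Strat S A) (ρ : ℕ → S × A) : Prop :=
  M.IsRun ρ ∧ ∀ i, (ρ i).2 = σ (runState ρ 0, prefixSteps ρ i)

def CompatFrom (σ : Strat S A) (s : S) (ρ : ℕ → S × A) : Prop :=
  M.Compat σ ρ ∧ runState ρ 0 = s

/-- A strategy is `d`-safe in `s` if all compatible runs from `s` are `d`-safe. -/
def SafeStrat (σ : Strat S A) (d : ℕ) (s : S) : Prop :=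
  ∀ ρ, M.CompatFrom σ s ρ → M.DSafe d ρ

/-- A finite history compatible with a strategy. -/
def CompatHist (σ : Strat S A) (s : S) (steps : List (A × S)) : Prop :=
  M.ValidPath s steps ∧
    ∀ (i : ℕ) (h : i < steps.length), (steps.get ⟨i, h⟩).1 = σ (s, steps.take i)

def Memoryless (σ : Strat S A) : Prop :=
  ∀ h₁ h₂ : S × List (A × S), lastState h₁.1 h₁.2 = lastState h₂.1 h₂.2 → σ h₁ = σ h₂

/-- Cost of a run up to the first visit of `T` (∞ if `T` is never visited). -/
def reachCost (T : Set S) (ρ : ℕ → S × A) : ℕ∞ :=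
  ⨅ i ∈ {i : ℕ | runState ρ i ∈ T}, (M.consAux (runState ρ 0) (prefixSteps ρ i) : ℕ∞)

/-- `i`-step bounded reachability cost. -/
def reachCostBdd (T : Set S) (n : ℕ) (ρ : ℕ → S × A) : ℕ∞ :=
  ⨅ i ∈ {i : ℕ | i ≤ n ∧ runState ρ i ∈ T}, (M.consAux (runState ρ 0) (prefixSteps ρ i) : ℕ∞)

/-- Reachability cost requiring at least one step. -/
def reachCostPlus (T : Set S) (ρ : ℕ → S × A) : ℕ∞ :=
  ⨅ i ∈ {i : ℕ | 1 ≤ i ∧ runState ρ i ∈ T}, (M.consAux (runState ρ 0) (prefixSteps ρ i) : ℕ∞)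

def reachCostStrat (T : Set S) (σ : Strat S A) (s : S) : ℕ∞ :=
  ⨆ ρ ∈ {ρ | M.CompatFrom σ s ρ}, M.reachCost T ρ

def minReach (T : Set S) (s : S) : ℕ∞ :=
  ⨅ σ : Strat S A, M.reachCostStrat T σ s

def minReachBdd (T : Set S) (n : ℕ) (s : S) : ℕ∞ :=
  ⨅ σ : Strat S A, ⨆ ρ ∈ {ρ | M.CompatFrom σ s ρ}, M.reachCostBdd T n ρ

def minReachPlus (T : Set S) (s : S) : ℕ∞ :=
  ⨅ σ : Strat S A, ⨆ ρ ∈ {ρ | M.CompatFrom σ s ρ}, M.reachCostPlus T ρ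

/-- The Bellman operator for minimum cost reachability of `T`. -/
def bellman (T : Set S) (v : S → ℕ∞) : S → ℕ∞ := fun s =>
  if s ∈ T then 0 else ⨅ a : A, ((M.C s a : ℕ∞) + ⨆ t ∈ M.Succ s a, v t)

/-- The initial vector: `0` on `T`, `∞` elsewhere. -/
def xTvec (T : Set S) : S → ℕ∞ := fun s => if s ∈ T then 0 else ⊤

/-- Length of the longest simple path of `M`. -/
def longestSimple : ℕ :=
  sSup {n | ∃ (s : S) (steps : List (A × S)),
    M.ValidPath s steps ∧ (s :: steps.map Prod.snd).Nodup ∧ steps.length = n}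

/-- The augmented CMDP `M̃` with a fresh non-reload copy of every state. -/
def augment : CMDP (S ⊕ S) A where
  Δ := fun x a t =>
    Sum.elim (fun u => M.Δ (Sum.elim id id x) a u) (fun _ => (0 : NNReal)) t
  Δ_sum := by
    intro x a
    rw [Fintype.sum_sum_type]
    simp [M.Δ_sum (Sum.elim id id x) a]
  C := fun x a => M.C (Sum.elim id id x) a
  R := Sum.inl '' M.R
  cap := M.cap

/-- Truncation to `0` on reload states. -/
def strunc (x : S → ℕ∞) : S → ℕ∞ := fun s => if s ∈ M.R then 0 else x s

/-- The truncated Bellman-like operator `G`. -/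
def opG (v : S → ℕ∞) : S → ℕ∞ := fun s =>
  ⨅ a : A, ((M.C s a : ℕ∞) + ⨆ t ∈ M.Succ s a, M.strunc v t)

/-- Minimal `d ≤ cap` such that some strategy is `d`-safe in `s` (∞ if none). -/
def safeVec (s : S) : ℕ∞ :=
  ⨅ d ∈ {d : ℕ | d ≤ M.cap ∧ ∃ σ : Strat S A, M.SafeStrat σ d s}, (d : ℕ∞)

/-- An action safe in a state. -/
def SafeAction (s : S) (a : A) : Prop :=
  (s ∉ M.R ∧ ((M.C s a : ℕ∞) + ⨆ t ∈ M.Succ s a, M.safeVec t) ≤ M.safeVec s) ∨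
  (s ∈ M.R ∧ ((M.C s a : ℕ∞) + ⨆ t ∈ M.Succ s a, M.safeVec t) ≤ (M.cap : ℕ∞))

/-- A CMDP is decreasing if every (valid) simple cycle has positive consumption. -/
def Decreasing : Prop :=
  ∀ (s : S) (steps : List (A × S)), M.ValidPath s steps → steps ≠ [] →
    lastState s steps = s → (s :: (steps.map Prod.snd).dropLast).Nodup →
    0 < M.consAux s steps

/-- Selection according to a selection rule: the action of the largest
element of the domain below the counter value. -/
def selectFrom (φ : ℕ → Option A) (m : ℕ) (a₀ : A) : A :=
  (((List.range (m + 1)).reverse).findSome? φ).getD a₀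

/-- The finite counter strategy `Σ^y` induced by a counter selector. -/
def counterStrategy (sel : S → ℕ → Option A) (y : S → ℕ) (a₀ : A) : Strat S A :=
  fun h =>
    match M.energy (y h.1) h.1 h.2 with
    | some m => selectFrom (sel (lastState h.1 h.2)) m a₀
    | none => a₀

/-- The `SPR` value of an action. -/
def spr (s : S) (a : A) (x : S → ℕ∞) : ℕ∞ :=
  (M.C s a : ℕ∞) +
    ⨅ t ∈ M.Succ s a, max (x t) (⨆ t' ∈ {t' ∈ M.Succ s a | t' ≠ t}, M.safeVec t')

def opA (T : Set S) (x : S → ℕ∞) : S → ℕ∞ := fun s =>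
  if s ∈ T then M.safeVec s else ⨅ a : A, M.spr s a x

/-- Two-sided truncation. -/
def trunc2 (x : S → ℕ∞) : S → ℕ∞ := fun s =>
  if (M.cap : ℕ∞) < x s then ⊤ else if s ∈ M.R then 0 else x s

def opB (T : Set S) (x : S → ℕ∞) : S → ℕ∞ := M.trunc2 (M.opA T x)

def yTvec (T : Set S) : S → ℕ∞ := fun s => if s ∈ T then M.safeVec s else ⊤

def VisitsWithin (T : Set S) (i : ℕ) (ρ : ℕ → S × A) : Prop :=
  ∃ j ≤ i, runState ρ j ∈ T

def Visits (T : Set S) (ρ : ℕ → S × A) : Prop := ∃ j, runState ρ j ∈ T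

/-- Minimal `ℓ ≤ cap` s.t. some `ℓ`-safe strategy from `s` has a run visiting `T`
within the first `i` steps. -/
def safePRBdd (T : Set S) (i : ℕ) (s : S) : ℕ∞ :=
  ⨅ ℓ ∈ {ℓ : ℕ | ℓ ≤ M.cap ∧ ∃ σ : Strat S A, M.SafeStrat σ ℓ s ∧
      ∃ ρ, M.CompatFrom σ s ρ ∧ VisitsWithin T i ρ}, (ℓ : ℕ∞)

/-- Minimal `ℓ ≤ cap` s.t. some `ℓ`-safe strategy from `s` has a run visiting `T`. -/
def safePR (T : Set S) (s : S) : ℕ∞ :=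
  ⨅ ℓ ∈ {ℓ : ℕ | ℓ ≤ M.cap ∧ ∃ σ : Strat S A, M.SafeStrat σ ℓ s ∧
      ∃ ρ, M.CompatFrom σ s ρ ∧ Visits T ρ}, (ℓ : ℕ∞)

/-- Replace the set of reload states. -/
def setReload (R' : Set S) : CMDP S A := { M with R := R' }

/-- Probability of a finite continuation of a history under a strategy. -/
def pathProbAux (σ : Strat S A) : S × List (A × S) → List (A × S) → NNReal
  | _, [] => 1
  | h, (a, t) :: rest =>
      (if σ h = a then M.Δ (lastState h.1 h.2) a t else 0) *
        pathProbAux σ (h.1, h.2 ++ [(a, t)]) rest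

/-- Probability that the length-`n` prefix of a run from `s` under `σ`
satisfies the predicate `P`. -/
def probEvent [Fintype A] (σ : Strat S A) (s : S) (n : ℕ) (P : List (A × S) → Prop) : NNReal :=
  ∑ f : Fin n → A × S,
    if P (List.ofFn f) then M.pathProbAux σ (s, []) (List.ofFn f) else 0

/-- Number of visits of `T` along a finite path. -/
def visitCount (T : Set S) (s : S) (steps : List (A × S)) : ℕ :=
  (s :: steps.map Prod.snd).countP (fun x => decide (x ∈ T))

/-- `T` is visited infinitely often with probability one under `σ` from `s`. -/
def buchiAS [Fintype A] (σ : Strat S A) (s : S) (T : Set S) : Prop :=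
  ∀ k : ℕ,
    (⨆ n : ℕ, M.probEvent σ s n (fun steps => k ≤ visitCount T s steps)) = 1

/-- Minimal `d ≤ cap` s.t. some strategy is `d`-safe in `s` and visits `T`
infinitely often almost surely. -/
def safeBuchiVec [Fintype A] (T : Set S) (s : S) : ℕ∞ :=
  ⨅ d ∈ {d : ℕ | d ≤ M.cap ∧ ∃ σ : Strat S A, M.SafeStrat σ d s ∧ M.buchiAS σ s T}, (d : ℕ∞)

/-- Iterated memory update of a memory structure. -/
def updStar {Mem : Type} (upd : Mem → S → A → S → Mem) : Mem → S → List (A × S) → Mem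
  | m, _, [] => m
  | m, s, (a, t) :: rest => updStar upd (upd m s a t) t rest

/-- Finite-memory strategies: encodable by a finite memory structure. -/
def FinMemStrategy (σ : Strat S A) : Prop :=
  ∃ (Mem : Type) (_ : Finite Mem) (init : S → Mem) (upd : Mem → S → A → S → Mem)
    (nxt : Mem → S → A),
    ∀ h : S × List (A × S), σ h = nxt (updStar upd (init h.1) h.1 h.2) (lastState h.1 h.2)

/-- The joint run `α ⊙ ρ`. -/
def jointRun (s : S) (steps : List (A × S)) (ρ : ℕ → S × A) : ℕ → S × A :=
  fun i => if h : i < steps.length then (stateAt s steps i, (steps.get ⟨i, h⟩).1)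
           else ρ (i - steps.length)

section Aux

lemma exists_succ (s : S) (a : A) : ∃ t, t ∈ M.Succ s a := by
  by_contra hne
  push_neg at hne
  have hz : ∀ t, M.Δ s a t = 0 := by
    intro t
    have := hne t
    simp [Succ] at this
    exact this
  have := M.Δ_sum s a
  simp [hz] at this

/-- A choice of successor. -/
def succOf (s : S) (a : A) : S := (M.exists_succ s a).choose

lemma succOf_mem (s : S) (a : A) : M.succOf s a ∈ M.Succ s a :=
  (M.exists_succ s a).choose_spec

/-- Histories of a canonical run compatible with σ from u. -/
def histOf (σ : Strat S A) (u : S) : ℕ → List (A × S)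
  | 0 => []
  | n + 1 =>
      histOf σ u n ++
        [(σ (u, histOf σ u n),
          M.succOf (lastState u (histOf σ u n)) (σ (u, histOf σ u n)))]

/-- A canonical run compatible with σ from u. -/
def runOf (σ : Strat S A) (u : S) (n : ℕ) : S × A :=
  (lastState u (M.histOf σ u n), σ (u, M.histOf σ u n))

lemma lastState_append_single (s : S) (L : List (A × S)) (a : A) (t : S) :
    lastState s (L ++ [(a, t)]) = t := by
  induction L generalizing s with
  | nil => rfl
  | cons p rest ih => cases p; simpa [lastState] using ih _

lemma prefixSteps_succ (ρ : ℕ → S × A) (i : ℕ) :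
    prefixSteps ρ (i + 1) = prefixSteps ρ i ++ [((ρ i).2, (ρ (i + 1)).1)] := by
  simp [prefixSteps, List.range_succ]

lemma prefix_runOf (σ : Strat S A) (u : S) (n : ℕ) :
    prefixSteps (M.runOf σ u) n = M.histOf σ u n := by
  induction n with
  | zero => rfl
  | succ n ih =>
      rw [prefixSteps_succ, ih]
      show _ = M.histOf σ u (n+1)
      simp only [histOf, runOf]
      congr 1
      simp [lastState_append_single]

lemma compat_runOf (σ : Strat S A) (u : S) : M.CompatFrom σ u (M.runOf σ u) := by
  refine ⟨⟨fun i => ?_, fun i => ?_⟩, rfl⟩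
  · show lastState u (M.histOf σ u (i+1)) ∈ _
    simp only [histOf, lastState_append_single]
    exact M.succOf_mem _ _
  · show σ (u, M.histOf σ u i) = σ (lastState u (M.histOf σ u 0), prefixSteps (M.runOf σ u) i)
    rw [M.prefix_runOf]
    rfl

lemma energy_cons (d : ℕ) (s t : S) (a : A) (L : List (A × S)) :
    M.energy d s ((a, t) :: L) = M.energyFrom (M.levelStep s a d) t L := rfl

lemma energyFrom_none (s : S) (L : List (A × S)) :
    M.energyFrom none s L = none := by cases L <;> rfl

end Aux

end CMDP
open CMDP in
/-- In a decreasing CMDP, every state with finite safe value has a safe action. -/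
theorem exists_safe_action {S A : Type} [Fintype S] (M : CMDP S A)
    (hdec : M.Decreasing) (s : S) (h : M.safeVec s < ⊤) :
    ∃ a : A, M.SafeAction s a := by
  classical
  -- the set of budgets with a safe strategy is nonempty
  have hPne : ∃ d : ℕ, d ≤ M.cap ∧ ∃ σ : Strat S A, M.SafeStrat σ d s := by
    by_contra hne
    push_neg at hne
    have : M.safeVec s = ⊤ := by
      rw [safeVec, iInf₂_eq_top]
      intro d hd
      rcases hd with ⟨h1, σ, h2⟩
      exact absurd h2 (hne d h1 σ)
    simp [this] at h
  set d := Nat.find hPne with hd_def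
  have hds : (d : ℕ∞) ≤ M.safeVec s :=
    le_iInf₂ fun e he => Nat.cast_le.2 (Nat.find_min' hPne he)
  obtain ⟨hdcap, σ, hσ⟩ := Nat.find_spec hPne
  set a := σ (s, []) with ha_def
  refine ⟨a, ?_⟩
  -- the canonical run shows the level step is defined
  have hsafe := hσ _ (M.compat_runOf σ s)
  have hls : M.levelStep s a d ≠ none := by
    intro hnone
    apply hsafe 1
    have h1 : runState (M.runOf σ s) 0 = s := rfl
    rw [h1, M.prefix_runOf σ s 1]
    show M.energy d s ([] ++ [(a, _)]) = none
    rw [List.nil_append, M.energy_cons, hnone, M.energyFrom_none]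
  obtain ⟨l, hl⟩ := Option.ne_none_iff_exists'.mp hls
  -- l ≤ cap
  have hlfacts : (s ∈ M.R → M.C s a ≤ M.cap ∧ l = M.cap - M.C s a) ∧
      (s ∉ M.R → M.C s a ≤ d ∧ l = d - M.C s a) := by
    constructor
    · intro hy
      have h2 : M.C s a ≤ M.cap := by
        by_contra hc
        have hl' := hl
        rw [levelStep, if_pos hy, if_neg hc] at hl'
        exact nomatch hl'
      refine ⟨h2, ?_⟩
      have hl' := hl
      rw [levelStep, if_pos hy, if_pos h2] at hl'
      exact (Option.some_inj.mp hl').symm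
    · intro hy
      have h2 : M.C s a ≤ d := by
        by_contra hc
        have hl' := hl
        rw [levelStep, if_neg hy, if_neg hc] at hl'
        exact nomatch hl'
      refine ⟨h2, ?_⟩
      have hl' := hl
      rw [levelStep, if_neg hy, if_pos h2] at hl'
      exact (Option.some_inj.mp hl').symm
  have hlcap : l ≤ M.cap := by
    by_cases hsR : s ∈ M.R
    · rcases hlfacts.1 hsR with ⟨_, rfl⟩; exact Nat.sub_le _ _
    · rcases hlfacts.2 hsR with ⟨_, rfl⟩; exact le_trans (Nat.sub_le _ _) hdcap
  -- every successor has safe value at most l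
  have hkey : ∀ t ∈ M.Succ s a, M.safeVec t ≤ (l : ℕ∞) := by
    intro t ht
    set σ' : Strat S A := fun h => σ (s, (a, h.1) :: h.2) with hσ'_def
    have hstrat : M.SafeStrat σ' l t := by
      rintro ρ ⟨⟨hrun, hact⟩, h0⟩
      set ρ' : ℕ → S × A := fun n => match n with
        | 0 => (s, a)
        | Nat.succ i => ρ i with hρ'_def
      have hpre : ∀ i, prefixSteps ρ' (i + 1) = (a, t) :: prefixSteps ρ i := by
        intro i
        induction i with
        | zero =>
            have e0 : (ρ' 0).2 = a := rfl
            have e1 : (ρ' 1).1 = (ρ 0).1 := rfl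
            have h0' : (ρ 0).1 = t := h0
            simp [prefixSteps, List.range_succ, e0, e1, h0']
        | succ i ih =>
            rw [prefixSteps_succ, ih, prefixSteps_succ, ← List.cons_append]
      have hcomp : M.CompatFrom σ s ρ' := by
        refine ⟨⟨fun i => ?_, fun i => ?_⟩, rfl⟩
        · match i with
          | 0 =>
              show (ρ 0).1 ∈ M.Succ s a
              rw [show (ρ 0).1 = t from h0]; exact ht
          | Nat.succ j => exact hrun j
        · match i with
          | 0 => rfl
          | Nat.succ j =>
              show (ρ j).2 = σ (runState ρ' 0, prefixSteps ρ' (j + 1))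
              rw [hpre j]
              have := hact j
              rw [h0] at this
              exact this
      have hds2 := hσ ρ' hcomp
      intro i
      have hstep := hds2 (i + 1)
      have hrs : runState ρ' 0 = s := rfl
      rw [hrs, hpre i, M.energy_cons, hl] at hstep
      rw [h0]
      exact hstep
    exact iInf₂_le l ⟨hlcap, σ', hstrat⟩
  have hsup : (⨆ t ∈ M.Succ s a, M.safeVec t) ≤ (l : ℕ∞) := iSup₂_le hkey
  by_cases hsR : s ∈ M.R
  · right
    refine ⟨hsR, ?_⟩
    rcases hlfacts.1 hsR with ⟨hC, hlv⟩
    calc (M.C s a : ℕ∞) + ⨆ t ∈ M.Succ s a, M.safeVec t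
        ≤ (M.C s a : ℕ∞) + (l : ℕ∞) := add_le_add le_rfl hsup
      _ = ((M.C s a + l : ℕ) : ℕ∞) := by push_cast; ring
      _ = (M.cap : ℕ∞) := by rw [hlv, Nat.add_sub_cancel' hC]
  · left
    refine ⟨hsR, ?_⟩
    rcases hlfacts.2 hsR with ⟨hC, hlv⟩
    calc (M.C s a : ℕ∞) + ⨆ t ∈ M.Succ s a, M.safeVec t
        ≤ (M.C s a : ℕ∞) + (l : ℕ∞) := add_le_add le_rfl hsup
      _ = ((M.C s a + l : ℕ) : ℕ∞) := by push_cast; ring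
      _ = (d : ℕ∞) := by rw [hlv, Nat.add_sub_cancel' hC]
      _ ≤ M.safeVec s := hds
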